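/- arXiv:2107.13326 — 4 statements merged into one kernel-verified Lean document; each statement's English description precedes it below -/
import Mathlib

section
/- For every sufficiently small constant ε > 0 and every η > 0 there exists C > 0 such that the following holds. Let d ≥ 3 and n be integers with n/d ≥ C, let p = (1−ε)/d, and let G = (V,E) be any d-regular simple graph on n vertices. Then with probability at least 1 − η, every connected component of the induced subgraph G[V_p] has at most (4/ε²)·ln(n/d) vertices. -/
open scoped Classical

/-- Probability, under the product Bernoulli(p) measure on `V → Bool`, of the event `A`:
each vertex is included (value `true`) independently with probability `p`. -/
noncomputable def percProb {V : Type*} [Fintype V] [DecidableEq V] (p : ℝ)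
    (A : Set (V → Bool)) : ℝ :=
  ∑ ω : V → Bool, if ω ∈ A then (∏ v : V, if ω v = true then p else 1 - p) else 0

/-- The random vertex subset `V_p` determined by the sample `ω`. -/
def vertexSet {V : Type*} (ω : V → Bool) : Set V := {v | ω v = true}

/-- The percolated graph `G[V_p]`: the subgraph of `G` induced on the chosen vertices. -/
def percGraph {V : Type*} (G : SimpleGraph V) (ω : V → Bool) :
    SimpleGraph (vertexSet ω) :=
  G.induce (vertexSet ω)

/-- `G` is an `(n,d,λ)`-graph: it is `d`-regular and every vector orthogonal to the
constants has Rayleigh quotient at most `lam` in absolute value, which for a `d`-regular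
graph is equivalent to `max (|λ₂|, |λₙ|) ≤ lam` for the adjacency-matrix eigenvalues
`d = λ₁ ≥ λ₂ ≥ ⋯ ≥ λₙ`. -/
def IsNDLGraph {V : Type*} [Fintype V] (G : SimpleGraph V) (d : ℕ) (lam : ℝ) : Prop :=
  (∀ v : V, Nat.card (G.neighborSet v) = d) ∧
  ∀ f : V → ℝ, (∑ v : V, f v) = 0 →
    |∑ v : V, ∑ w : V, (if G.Adj v w then f v * f w else 0)| ≤ lam * ∑ v : V, (f v) ^ 2

/-- External neighbourhood of `S` in `G`: vertices outside `S` with a neighbour in `S`. -/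
def extNbhd {V : Type*} (G : SimpleGraph V) (S : Set V) : Set V :=
  {v | v ∉ S ∧ ∃ u ∈ S, G.Adj u v}

namespace SCB

variable {V : Type*} [Fintype V] [DecidableEq V]

noncomputable def bern (p : ℝ) (b : Bool) : ℝ := if b = true then p else 1 - p

noncomputable def W (p : ℝ) (ω : V → Bool) : ℝ := ∏ v, bern p (ω v)

lemma percProb_def (p : ℝ) (A : Set (V → Bool)) :
    percProb p A = ∑ ω : V → Bool, (if ω ∈ A then W p ω else 0) := rfl

lemma bern_nonneg {p : ℝ} (hp0 : 0 ≤ p) (hp1 : p ≤ 1) (b : Bool) : 0 ≤ bern p b := by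
  cases b <;> simp [bern] <;> linarith

lemma W_nonneg {p : ℝ} (hp0 : 0 ≤ p) (hp1 : p ≤ 1) (ω : V → Bool) : 0 ≤ W p ω :=
  Finset.prod_nonneg fun v _ => bern_nonneg hp0 hp1 _

lemma sum_bern (p : ℝ) : ∑ b : Bool, bern p b = 1 := by
  simp [bern]

lemma sum_W (p : ℝ) : ∑ ω : V → Bool, W p ω = 1 := by
  have h := Finset.prod_univ_sum (fun _ : V => (Finset.univ : Finset Bool)) (fun _ b => bern p b)
  simp only [Fintype.piFinset_univ] at h
  calc ∑ ω : V → Bool, W p ω = ∏ _v : V, ∑ b : Bool, bern p b := h.symm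
    _ = 1 := by simp only [sum_bern, Finset.prod_const_one]

lemma percProb_nonneg {p : ℝ} (hp0 : 0 ≤ p) (hp1 : p ≤ 1) (A : Set (V → Bool)) :
    0 ≤ percProb p A := by
  rw [percProb_def]
  refine Finset.sum_nonneg fun ω _ => ?_
  split_ifs
  · exact W_nonneg hp0 hp1 ω
  · exact le_refl 0

lemma percProb_mono {p : ℝ} (hp0 : 0 ≤ p) (hp1 : p ≤ 1) {A B : Set (V → Bool)}
    (h : A ⊆ B) : percProb p A ≤ percProb p B := by
  rw [percProb_def, percProb_def]
  refine Finset.sum_le_sum fun ω _ => ?_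
  by_cases hA : ω ∈ A
  · simp [hA, h hA]
  · simp only [hA, if_false]
    split_ifs
    · exact W_nonneg hp0 hp1 ω
    · exact le_refl 0

lemma percProb_univ (p : ℝ) : percProb p (Set.univ : Set (V → Bool)) = 1 := by
  rw [percProb_def]
  simp only [Set.mem_univ, if_true]
  exact sum_W p

lemma percProb_le_one {p : ℝ} (hp0 : 0 ≤ p) (hp1 : p ≤ 1) (A : Set (V → Bool)) :
    percProb p A ≤ 1 := by
  rw [← percProb_univ (V := V) p]
  exact percProb_mono hp0 hp1 (Set.subset_univ A)

lemma percProb_empty (p : ℝ) : percProb p (∅ : Set (V → Bool)) = 0 := by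
  rw [percProb_def]; simp

lemma percProb_compl (p : ℝ) (A : Set (V → Bool)) :
    percProb p {ω | ω ∉ A} = 1 - percProb p A := by
  rw [percProb_def, percProb_def, eq_sub_iff_add_eq, ← Finset.sum_add_distrib,
    ← sum_W (V := V) p]
  refine Finset.sum_congr rfl fun ω _ => ?_
  by_cases h : ω ∈ A <;> simp [h]

lemma percProb_exists_le {p : ℝ} (hp0 : 0 ≤ p) (hp1 : p ≤ 1) {ι : Type*} [Fintype ι]
    (P : ι → (V → Bool) → Prop) :
    percProb p {ω | ∃ i, P i ω} ≤ ∑ i : ι, percProb p {ω | P i ω} := by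
  simp only [percProb_def]
  rw [Finset.sum_comm]
  refine Finset.sum_le_sum fun ω _ => ?_
  by_cases h : ω ∈ {ω | ∃ i, P i ω}
  · obtain ⟨i, hi⟩ := h
    rw [if_pos ⟨i, hi⟩]
    have h1 : W p ω = (if ω ∈ {ω | P i ω} then W p ω else 0) := by simp [hi]
    refine h1.le.trans (Finset.single_le_sum (f := fun i => if ω ∈ {ω | P i ω} then W p ω else 0)
      (fun j _ => ?_) (Finset.mem_univ i))
    split_ifs
    · exact W_nonneg hp0 hp1 ω
    · exact le_refl 0
  · rw [if_neg h]
    refine Finset.sum_nonneg fun j _ => ?_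
    split_ifs
    · exact W_nonneg hp0 hp1 ω
    · exact le_refl 0

/-! conditioning -/

def NotDep (v : V) (E : Set (V → Bool)) : Prop :=
  ∀ ω b, Function.update ω v b ∈ E ↔ ω ∈ E

lemma sum_split (v : V) (F : (V → Bool) → ℝ) :
    ∑ ω : V → Bool, F ω
      = ∑ g : { j // j ≠ v } → Bool, ∑ b : Bool,
          F ((Equiv.funSplitAt v Bool).symm (b, g)) := by
  rw [← Equiv.sum_comp (Equiv.funSplitAt v Bool).symm F, Fintype.sum_prod_type]
  rw [Finset.sum_comm]

lemma W_split (p : ℝ) (v : V) (b : Bool) (g : { j // j ≠ v } → Bool) :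
    W p ((Equiv.funSplitAt v Bool).symm (b, g))
      = bern p b * ∏ u : { j // j ≠ v }, bern p (g u) := by
  rw [W, Fintype.prod_eq_mul_prod_compl v]
  congr 1
  · congr 1
    simp [Equiv.funSplitAt, Equiv.piSplitAt]
  · rw [Finset.prod_subtype (p := fun u => u ≠ v) ({v}ᶜ : Finset V) (by simp)
      (fun u => bern p (((Equiv.funSplitAt v Bool).symm (b, g)) u))]
    refine Finset.prod_congr rfl fun u _ => ?_
    congr 1
    simp [Equiv.funSplitAt, Equiv.piSplitAt, u.2]

lemma funSplitAt_symm_update (v : V) (b b' : Bool) (g : { j // j ≠ v } → Bool) :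
    Function.update ((Equiv.funSplitAt v Bool).symm (b, g)) v b'
      = (Equiv.funSplitAt v Bool).symm (b', g) := by
  funext u
  by_cases h : u = v
  · subst h; simp [Equiv.funSplitAt, Equiv.piSplitAt]
  · simp [Function.update, h, Equiv.funSplitAt, Equiv.piSplitAt]

lemma percProb_notDep (p : ℝ) (v : V) (E : Set (V → Bool)) (hE : NotDep v E) (b : Bool) :
    percProb p E = ∑ g : { j // j ≠ v } → Bool,
      (if (Equiv.funSplitAt v Bool).symm (b, g) ∈ E then 1 else 0)
        * ∏ u : { j // j ≠ v }, bern p (g u) := by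
  rw [percProb_def, sum_split v]
  refine Finset.sum_congr rfl fun g _ => ?_
  have hmem : ∀ b' : Bool, ((Equiv.funSplitAt v Bool).symm (b', g) ∈ E)
      ↔ ((Equiv.funSplitAt v Bool).symm (b, g) ∈ E) := by
    intro b'
    rw [← funSplitAt_symm_update v b b' g, hE]
  rw [Fintype.sum_bool]
  rw [W_split, W_split]
  by_cases h : (Equiv.funSplitAt v Bool).symm (b, g) ∈ E
  · rw [if_pos ((hmem true).mpr h), if_pos ((hmem false).mpr h), if_pos h]
    simp [bern]
    ring
  · rw [if_neg fun hh => h ((hmem true).mp hh), if_neg fun hh => h ((hmem false).mp hh), if_neg h]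
    simp

end SCB

namespace SCB
variable {V : Type*} [Fintype V] [DecidableEq V]

lemma percProb_combo {p : ℝ} (v : V) (E₁ E₀ : Set (V → Bool))
    (h₁ : NotDep v E₁) (h₀ : NotDep v E₀) :
    percProb p {ω | if ω v = true then ω ∈ E₁ else ω ∈ E₀}
      = p * percProb p E₁ + (1 - p) * percProb p E₀ := by
  rw [percProb_notDep p v E₁ h₁ true, percProb_notDep p v E₀ h₀ false]
  rw [percProb_def, sum_split v]
  rw [Finset.mul_sum, Finset.mul_sum, ← Finset.sum_add_distrib]
  refine Finset.sum_congr rfl fun g _ => ?_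
  rw [Fintype.sum_bool, W_split, W_split]
  have hvtrue : ((Equiv.funSplitAt v Bool).symm (true, g)) v = true := by
    simp [Equiv.funSplitAt, Equiv.piSplitAt]
  have hvfalse : ((Equiv.funSplitAt v Bool).symm (false, g)) v = false := by
    simp [Equiv.funSplitAt, Equiv.piSplitAt]
  have e1 : ((Equiv.funSplitAt v Bool).symm (true, g)) ∈ {ω | if ω v = true then ω ∈ E₁ else ω ∈ E₀}
      ↔ ((Equiv.funSplitAt v Bool).symm (true, g)) ∈ E₁ := by
    simp only [Set.mem_setOf_eq, hvtrue, if_true]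
  have e0 : ((Equiv.funSplitAt v Bool).symm (false, g)) ∈ {ω | if ω v = true then ω ∈ E₁ else ω ∈ E₀}
      ↔ ((Equiv.funSplitAt v Bool).symm (false, g)) ∈ E₀ := by
    simp only [Set.mem_setOf_eq, hvfalse]
    norm_num
  simp only [e1, e0]
  by_cases m1 : ((Equiv.funSplitAt v Bool).symm (true, g)) ∈ E₁ <;>
    by_cases m0 : ((Equiv.funSplitAt v Bool).symm (false, g)) ∈ E₀ <;>
      · simp [m1, m0, bern]

/-! Good events and binomial tails -/

inductive Good : ℕ → ℕ → Set (V → Bool) → Prop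
  | zero (N : ℕ) (E : Set (V → Bool)) : Good N 0 E
  | empty (N m : ℕ) : Good N m (∅ : Set (V → Bool))
  | step (N m : ℕ) (E : Set (V → Bool)) (v : V) (E₁ E₀ : Set (V → Bool))
      (h₁ : NotDep v E₁) (h₀ : NotDep v E₀)
      (g₁ : Good N m E₁) (g₀ : Good N (m + 1) E₀)
      (hsub : ∀ ω ∈ E, if ω v = true then ω ∈ E₁ else ω ∈ E₀) :
      Good (N + 1) (m + 1) E

noncomputable def binTail (p : ℝ) : ℕ → ℕ → ℝ
  | _, 0 => 1
  | 0, _ + 1 => 0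
  | N + 1, m + 1 => p * binTail p N m + (1 - p) * binTail p N (m + 1)

lemma binTail_nonneg {p : ℝ} (hp0 : 0 ≤ p) (hp1 : p ≤ 1) : ∀ N m, 0 ≤ binTail p N m := by
  intro N
  induction N with
  | zero => intro m; cases m with
      | zero => rw [binTail]; norm_num
      | succ m => rw [binTail]
  | succ N ih => intro m; cases m with
      | zero => rw [binTail]; norm_num
      | succ m =>
          rw [binTail]
          have := ih m
          have := ih (m + 1)
          nlinarith

lemma good_le_binTail {p : ℝ} (hp0 : 0 ≤ p) (hp1 : p ≤ 1) {N m : ℕ} {E : Set (V → Bool)}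
    (h : Good N m E) : percProb p E ≤ binTail p N m := by
  induction h with
  | zero N E =>
      calc percProb p E ≤ 1 := percProb_le_one hp0 hp1 E
        _ = binTail p N 0 := by rw [binTail]
  | empty N m =>
      rw [percProb_empty]
      exact binTail_nonneg hp0 hp1 N m
  | step N m E v E₁ E₀ h₁ h₀ g₁ g₀ hsub ih₁ ih₀ =>
      have hEsub : E ⊆ {ω | if ω v = true then ω ∈ E₁ else ω ∈ E₀} := fun ω hω => hsub ω hω
      calc percProb p E ≤ percProb p {ω | if ω v = true then ω ∈ E₁ else ω ∈ E₀} :=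
            percProb_mono hp0 hp1 hEsub
        _ = p * percProb p E₁ + (1 - p) * percProb p E₀ := percProb_combo v E₁ E₀ h₁ h₀
        _ ≤ p * binTail p N m + (1 - p) * binTail p N (m + 1) := by
            have := mul_le_mul_of_nonneg_left ih₁ hp0
            have := mul_le_mul_of_nonneg_left ih₀ (by linarith : (0:ℝ) ≤ 1 - p)
            linarith
        _ = binTail p (N + 1) (m + 1) := by rw [binTail]

lemma binTail_le_chernoff {p : ℝ} (hp0 : 0 ≤ p) (hp1 : p ≤ 1) {t : ℝ} (ht : 0 ≤ t) :
    ∀ N m, binTail p N m ≤ Real.exp (-(t * m)) * (1 - p + p * Real.exp t) ^ N := by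
  have hbase : (1:ℝ) ≤ 1 - p + p * Real.exp t := by
    nlinarith [Real.add_one_le_exp t]
  have hbase0 : (0:ℝ) ≤ 1 - p + p * Real.exp t := by linarith
  intro N
  induction N with
  | zero =>
      intro m; cases m with
      | zero => rw [binTail]; simp
      | succ m => rw [binTail]; positivity
  | succ N ih =>
      intro m; cases m with
      | zero =>
          rw [binTail]
          simp only [Nat.cast_zero, mul_zero, neg_zero, Real.exp_zero, one_mul]
          exact one_le_pow₀ hbase
      | succ m =>
          rw [binTail]
          have h1 := ih m
          have h0 := ih (m + 1)
          push_cast at h0 ⊢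
          calc p * binTail p N m + (1 - p) * binTail p N (m + 1)
              ≤ p * (Real.exp (-(t * (m:ℝ))) * (1 - p + p * Real.exp t) ^ N)
                + (1 - p) * (Real.exp (-(t * ((m:ℝ)+1))) * (1 - p + p * Real.exp t) ^ N) := by
                have := mul_le_mul_of_nonneg_left h1 hp0
                have := mul_le_mul_of_nonneg_left h0 (by linarith : (0:ℝ) ≤ 1 - p)
                linarith
            _ = Real.exp (-(t * ((m:ℝ)+1))) * (1 - p + p * Real.exp t) ^ (N+1) := by
                have hexp : Real.exp (-(t * (m:ℝ))) = Real.exp (-(t * ((m:ℝ)+1))) * Real.exp t := by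
                  rw [← Real.exp_add]; ring_nf
                rw [hexp]; ring

end SCB

namespace SCB

variable {V : Type*} [Fintype V] [DecidableEq V]

def openAdj {V : Type*} (G : SimpleGraph V) (ω : V → Bool) (a b : V) : Prop :=
  G.Adj a b ∧ ω a = true ∧ ω b = true

def reachSet {V : Type*} (G : SimpleGraph V) (ω : V → Bool) (v : V) : Set V :=
  {u | Relation.ReflTransGen (openAdj G ω) v u}

lemma reachSet_open {V : Type*} {G : SimpleGraph V} {ω : V → Bool} {v u : V}
    (hv : ω v = true) (hu : u ∈ reachSet G ω v) : ω u = true := by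
  induction hu with
  | refl => exact hv
  | tail _ h ih => exact h.2.2

lemma walk_to_rtg {V : Type*} {G : SimpleGraph V} {ω : V → Bool} :
    ∀ {a b : ↥(vertexSet ω)}, (percGraph G ω).Walk a b →
      Relation.ReflTransGen (openAdj G ω) (a : V) (b : V) := by
  intro a b w
  induction w with
  | nil => exact Relation.ReflTransGen.refl
  | cons h w ih =>
      rename_i x y z
      refine Relation.ReflTransGen.head ⟨?_, x.2, y.2⟩ ih
      exact h

lemma rtg_to_reachable {V : Type*} {G : SimpleGraph V} {ω : V → Bool} {v : V} (hv : ω v = true) :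
    ∀ {u : V}, u ∈ reachSet G ω v →
      ∃ hu : ω u = true, (percGraph G ω).Reachable ⟨v, hv⟩ ⟨u, hu⟩ := by
  intro u hu
  induction hu with
  | refl => exact ⟨hv, SimpleGraph.Reachable.refl _⟩
  | tail hr hstep ih =>
      rename_i b c
      obtain ⟨hb, hrb⟩ := ih
      have hc : ω c = true := hstep.2.2
      have hadj : (percGraph G ω).Adj ⟨b, hb⟩ ⟨c, hc⟩ := hstep.1
      exact ⟨hc, hrb.trans hadj.reachable⟩

lemma reachable_iff {V : Type*} {G : SimpleGraph V} {ω : V → Bool} {v : V} (hv : ω v = true)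
    (x : ↥(vertexSet ω)) :
    (percGraph G ω).Reachable ⟨v, hv⟩ x ↔ (x : V) ∈ reachSet G ω v := by
  constructor
  · intro h
    obtain ⟨w⟩ := h
    exact walk_to_rtg w
  · intro h
    obtain ⟨hu, hr⟩ := rtg_to_reachable hv h
    have : (⟨(x : V), hu⟩ : ↥(vertexSet ω)) = x := Subtype.ext rfl
    rwa [this] at hr

lemma card_supp {V : Type*} [Fintype V] {G : SimpleGraph V} {ω : V → Bool} {v : V}
    (hv : ω v = true) :
    Nat.card (((percGraph G ω).connectedComponentMk ⟨v, hv⟩).supp)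
      = Nat.card (reachSet G ω v) := by
  refine Nat.card_congr ?_
  refine
    { toFun := fun x => ⟨(x.1 : V), (reachable_iff hv x.1).1
        ((SimpleGraph.ConnectedComponent.exact x.2).symm)⟩
      invFun := fun u => ⟨⟨(u : V), reachSet_open hv u.2⟩, ?_⟩
      left_inv := fun x => by ext; rfl
      right_inv := fun u => by ext; rfl }
  · rw [SimpleGraph.ConnectedComponent.mem_supp_iff]
    exact SimpleGraph.ConnectedComponent.sound
      (((reachable_iff hv ⟨(u : V), reachSet_open hv u.2⟩).2 u.2).symm)

def patch (X : Finset V) (ρ ω : V → Bool) : V → Bool :=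
  fun u => if u ∈ X then ρ u else ω u

lemma patch_update_mem {X : Finset V} {v : V} (hv : v ∈ X) (ρ ω : V → Bool) (b : Bool) :
    patch X ρ (Function.update ω v b) = patch X ρ ω := by
  funext u
  by_cases h : u ∈ X
  · simp [patch, h]
  · have huv : u ≠ v := fun e => h (e ▸ hv)
    simp [patch, h, Function.update_of_ne huv]

lemma notDep_patch (X : Finset V) (ρ : V → Bool) {v : V} (hv : v ∈ X)
    (Φ : (V → Bool) → Prop) : NotDep v {ω | Φ (patch X ρ ω)} := by
  intro ω b
  simp only [Set.mem_setOf_eq, patch_update_mem hv]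

lemma patch_insert {X : Finset V} {q : V} (hq : q ∉ X) (ρ ω : V → Bool) :
    patch (insert q X) (Function.update ρ q (ω q)) ω = patch X ρ ω := by
  funext u
  by_cases h : u = q
  · subst h; simp [patch, hq, Function.update_self]
  · by_cases h2 : u ∈ X <;> simp [patch, h, h2, Function.update_of_ne h]

lemma closed_event_empty (G : SimpleGraph V) (v : V) (k : ℕ) (X : Finset V) (ρ : V → Bool)
    (D : Finset V) (hvD : v ∈ D) (hρD : ∀ u ∈ D, ρ u = true)
    (hXD : ∀ u ∈ X, ρ u = true → u ∈ D)
    (hcl : ∀ u ∈ D, ∀ w, G.Adj u w → w ∈ X)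
    (hk : D.card < k) :
    {ω : V → Bool | k ≤ Nat.card (reachSet G (patch X ρ ω) v)} = ∅ := by
  ext ω
  simp only [Set.mem_setOf_eq, Set.mem_empty_iff_false, iff_false, not_le]
  have hsub : reachSet G (patch X ρ ω) v ⊆ (↑D : Set V) := by
    intro u hu
    induction hu with
    | refl => exact hvD
    | tail hr hstep ih =>
        rename_i b c
        have hbD : b ∈ D := ih
        have hcX : c ∈ X := hcl b hbD c hstep.1
        have hρc : ρ c = true := by
          have := hstep.2.2
          rwa [patch, if_pos hcX] at this
        exact hXD c hcX hρc
  calc Nat.card (reachSet G (patch X ρ ω) v)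
      = (reachSet G (patch X ρ ω) v).ncard := Nat.card_coe_set_eq _
    _ ≤ (↑D : Set V).ncard := Set.ncard_le_ncard hsub (Set.toFinite _)
    _ = D.card := Set.ncard_coe_finset D
    _ < k := hk

lemma bfs_good (G : SimpleGraph V) (d : ℕ)
    (hreg : ∀ u : V, (G.neighborSet u).toFinset.card = d) (v : V) (k : ℕ) :
    ∀ (N m : ℕ) (X : Finset V) (ρ : V → Bool) (D : Finset V) (Q : List V),
      Q.Nodup → (∀ q ∈ Q, q ∉ X) →
      v ∈ D → D ⊆ X →
      (∀ u ∈ D, ρ u = true) → (∀ u ∈ X, ρ u = true → u ∈ D) →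
      (∀ u ∈ D, ∀ w, G.Adj u w → w ∈ X ∨ w ∈ Q) →
      D.card + m ≤ k →
      (m = 0 ∨ Q.length + (m - 1) * d ≤ N) →
      Good N m {ω | k ≤ Nat.card (reachSet G (patch X ρ ω) v)} := by
  intro N
  induction N with
  | zero =>
      intro m X ρ D Q hnd hQX hvD hDX hρD hXD hcl hcard hbud
      match m, hbud with
      | 0, _ => exact Good.zero 0 _
      | mc + 1, Or.inr h =>
          have hQ : Q = [] := by
            have : Q.length = 0 := by omega
            exact List.length_eq_zero_iff.mp this
          subst hQ
          rw [closed_event_empty G v k X ρ D hvD hρD hXD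
            (fun u hu w hw => ((hcl u hu w hw).resolve_right (by simp)))
            (by omega)]
          exact Good.empty 0 (mc + 1)
  | succ N ih =>
      intro m X ρ D Q hnd hQX hvD hDX hρD hXD hcl hcard hbud
      match m, hbud with
      | 0, _ => exact Good.zero (N + 1) _
      | mc + 1, Or.inr hb =>
          cases Q with
          | nil =>
              rw [closed_event_empty G v k X ρ D hvD hρD hXD
                (fun u hu w hw => ((hcl u hu w hw).resolve_right (by simp)))
                (by omega)]
              exact Good.empty (N + 1) (mc + 1)
          | cons q Q' =>
              have hqX : q ∉ X := hQX q List.mem_cons_self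
              have hqQ' : q ∉ Q' := (List.nodup_cons.mp hnd).1
              have hnd' : Q'.Nodup := (List.nodup_cons.mp hnd).2
              set newL := ((G.neighborSet q).toFinset.filter
                (fun w => ¬ (w ∈ X ∨ w ∈ Q' ∨ w = q))).toList with hnewL
              set newQ := Q' ++ newL with hnewQ
              have hlen : newQ.length ≤ Q'.length + d := by
                have h1 : newL.length ≤ d := by
                  rw [hnewL, Finset.length_toList]
                  exact le_trans (Finset.card_filter_le _ _) (le_of_eq (hreg q))
                simp only [hnewQ, List.length_append]
                omega
              refine Good.step N mc _ q
                {ω | k ≤ Nat.card (reachSet G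
                  (patch (insert q X) (Function.update ρ q true) ω) v)}
                {ω | k ≤ Nat.card (reachSet G
                  (patch (insert q X) (Function.update ρ q false) ω) v)}
                (notDep_patch _ _ (Finset.mem_insert_self q X)
                  (fun ω' => k ≤ Nat.card (reachSet G ω' v)))
                (notDep_patch _ _ (Finset.mem_insert_self q X)
                  (fun ω' => k ≤ Nat.card (reachSet G ω' v)))
                ?_ ?_ ?_
              · -- true child
                refine ih mc (insert q X) (Function.update ρ q true) (insert q D) newQ
                  ?_ ?_ ?_ ?_ ?_ ?_ ?_ ?_ ?_
                · refine hnd'.append (Finset.nodup_toList _) ?_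
                  intro a ha hb
                  rw [hnewL, Finset.mem_toList, Finset.mem_filter] at hb
                  exact hb.2 (Or.inr (Or.inl ha))
                · intro a ha
                  rw [hnewQ, List.mem_append] at ha
                  rw [Finset.mem_insert]
                  rcases ha with ha | ha
                  · push_neg
                    exact ⟨fun e => hqQ' (e ▸ ha), hQX a (List.mem_cons_of_mem q ha)⟩
                  · rw [hnewL, Finset.mem_toList, Finset.mem_filter] at ha
                    push_neg at ha ⊢
                    exact ⟨ha.2.2.2, ha.2.1⟩
                · exact Finset.mem_insert_of_mem hvD
                · exact Finset.insert_subset_insert q hDX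
                · intro u hu
                  rcases Finset.mem_insert.mp hu with h | h
                  · subst h; rw [Function.update_self]
                  · have : u ≠ q := fun e => hqX (e ▸ hDX h)
                    rw [Function.update_of_ne this]
                    exact hρD u h
                · intro u hu hρu
                  rcases Finset.mem_insert.mp hu with h | h
                  · subst h; exact Finset.mem_insert_self u D
                  · have hne : u ≠ q := fun e => hqX (e ▸ h)
                    rw [Function.update_of_ne hne] at hρu
                    exact Finset.mem_insert_of_mem (hXD u h hρu)
                · intro u hu w hw
                  rcases Finset.mem_insert.mp hu with h | h
                  · have hw' : G.Adj q w := by rw [← h]; exact hw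
                    by_cases hcase : w ∈ X ∨ w ∈ Q' ∨ w = q
                    · rcases hcase with h | h | h
                      · exact Or.inl (Finset.mem_insert_of_mem h)
                      · exact Or.inr (by rw [hnewQ, List.mem_append]; exact Or.inl h)
                      · exact Or.inl (by rw [h]; exact Finset.mem_insert_self q X)
                    · refine Or.inr ?_
                      rw [hnewQ, List.mem_append]
                      refine Or.inr ?_
                      rw [hnewL, Finset.mem_toList, Finset.mem_filter]
                      exact ⟨by rw [Set.mem_toFinset]; exact hw', hcase⟩
                  · rcases hcl u h w hw with h2 | h2
                    · exact Or.inl (Finset.mem_insert_of_mem h2)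
                    · rcases List.mem_cons.mp h2 with h3 | h3
                      · exact Or.inl (by rw [h3]; exact Finset.mem_insert_self q X)
                      · exact Or.inr (by rw [hnewQ, List.mem_append]; exact Or.inl h3)
                · have hqD : q ∉ D := fun h => hqX (hDX h)
                  rw [Finset.card_insert_of_notMem hqD]
                  omega
                · rcases Nat.eq_zero_or_pos mc with h | h
                  · exact Or.inl h
                  · refine Or.inr ?_
                    obtain ⟨mc', rfl⟩ : ∃ mc', mc = mc' + 1 := ⟨mc - 1, by omega⟩
                    have h2 : Q'.length + 1 + (mc' + 1) * d ≤ N + 1 := by simpa using hb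
                    rw [Nat.succ_mul] at h2
                    simp only [Nat.add_sub_cancel]
                    have hl := hlen
                    generalize mc' * d = A at h2 ⊢
                    omega
              · -- false child
                refine ih (mc + 1) (insert q X) (Function.update ρ q false) D Q'
                  hnd' ?_ hvD (hDX.trans (Finset.subset_insert q X)) ?_ ?_ ?_ hcard ?_
                · intro a ha
                  rw [Finset.mem_insert]
                  push_neg
                  exact ⟨fun e => hqQ' (e ▸ ha), hQX a (List.mem_cons_of_mem q ha)⟩
                · intro u hu
                  have : u ≠ q := fun e => hqX (e ▸ hDX hu)
                  rw [Function.update_of_ne this]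
                  exact hρD u hu
                · intro u hu hρu
                  rcases Finset.mem_insert.mp hu with h | h
                  · subst h; rw [Function.update_self] at hρu; exact absurd hρu (by simp)
                  · have hne : u ≠ q := fun e => hqX (e ▸ h)
                    rw [Function.update_of_ne hne] at hρu
                    exact hXD u h hρu
                · intro u hu w hw
                  rcases hcl u hu w hw with h | h
                  · exact Or.inl (Finset.mem_insert_of_mem h)
                  · rcases List.mem_cons.mp h with h | h
                    · exact Or.inl (by rw [h]; exact Finset.mem_insert_self q X)
                    · exact Or.inr h
                · refine Or.inr ?_
                  have h2 : Q'.length + 1 + mc * d ≤ N + 1 := by simpa using hb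
                  simp only [Nat.add_sub_cancel]
                  generalize mc * d = A at h2 ⊢
                  omega
              · -- subset condition
                intro ω hω
                by_cases hq : ω q = true
                · rw [if_pos hq]
                  have e1 : Function.update ρ q true = Function.update ρ q (ω q) := by
                    rw [hq]
                  show k ≤ Nat.card (reachSet G
                    (patch (insert q X) (Function.update ρ q true) ω) v)
                  rw [e1, patch_insert hqX]
                  exact hω
                · rw [if_neg hq]
                  have hqf : ω q = false := by
                    cases h : ω q
                    · rfl
                    · exact absurd h hq
                  have e1 : Function.update ρ q false = Function.update ρ q (ω q) := by
                    rw [hqf]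
                  show k ≤ Nat.card (reachSet G
                    (patch (insert q X) (Function.update ρ q false) ω) v)
                  rw [e1, patch_insert hqX]
                  exact hω

lemma percProb_and_notDep {p : ℝ} (v : V) (F : Set (V → Bool)) (hF : NotDep v F) :
    percProb p {ω | ω v = true ∧ ω ∈ F} = p * percProb p F := by
  have h0 : NotDep v (∅ : Set (V → Bool)) := by intro ω b; simp
  have := percProb_combo (p := p) v F ∅ hF h0
  have hset : {ω : V → Bool | if ω v = true then ω ∈ F else ω ∈ (∅ : Set (V → Bool))}
      = {ω | ω v = true ∧ ω ∈ F} := by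
    ext ω
    by_cases h : ω v = true <;> simp [h]
  rw [hset, percProb_empty, mul_zero, add_zero] at this
  exact this

lemma per_vertex {p : ℝ} (hp0 : 0 ≤ p) (hp1 : p ≤ 1) (G : SimpleGraph V) (d : ℕ)
    (hreg : ∀ u : V, (G.neighborSet u).toFinset.card = d) (v : V) (k : ℕ) (hk : 1 ≤ k) :
    percProb p {ω | ω v = true ∧ k ≤ Nat.card (reachSet G ω v)}
      ≤ p * binTail p (d * (k - 1)) (k - 1) := by
  set F := {ω : V → Bool | k ≤ Nat.card (reachSet G (patch {v} (fun _ => true) ω) v)} with hF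
  have hND : NotDep v F :=
    notDep_patch {v} (fun _ => true) (Finset.mem_singleton_self v)
      (fun ω' => k ≤ Nat.card (reachSet G ω' v))
  have hpe : ∀ ω : V → Bool, ω v = true → patch {v} (fun _ => true) ω = ω := by
    intro ω hω
    funext u
    by_cases h : u = v
    · subst h; simp [patch, hω]
    · simp [patch, h]
  have hset : {ω : V → Bool | ω v = true ∧ k ≤ Nat.card (reachSet G ω v)}
      = {ω | ω v = true ∧ ω ∈ F} := by
    ext ω
    simp only [Set.mem_setOf_eq, hF, and_congr_right_iff]
    intro hω
    rw [hpe ω hω]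
  rw [hset, percProb_and_notDep v F hND]
  refine mul_le_mul_of_nonneg_left ?_ hp0
  refine good_le_binTail hp0 hp1 ?_
  obtain ⟨j, rfl⟩ : ∃ j, k = j + 1 := ⟨k - 1, by omega⟩
  simp only [Nat.add_sub_cancel]
  refine bfs_good G d hreg v (j + 1) (d * j) j {v} (fun _ => true) {v}
    (G.neighborSet v).toFinset.toList (Finset.nodup_toList _) ?_
    (Finset.mem_singleton_self v) (le_refl _) (fun _ _ => rfl) (fun u hu _ => hu) ?_ ?_ ?_
  · intro q hq
    rw [Finset.mem_toList, Set.mem_toFinset] at hq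
    rw [Finset.mem_singleton]
    exact (G.ne_of_adj hq).symm
  · intro u hu w hw
    rw [Finset.mem_singleton] at hu
    subst hu
    refine Or.inr ?_
    rw [Finset.mem_toList, Set.mem_toFinset]
    exact hw
  · simp
    omega
  · rcases Nat.eq_zero_or_pos j with h | h
    · exact Or.inl h
    · refine Or.inr ?_
      obtain ⟨j', rfl⟩ : ∃ j', j = j' + 1 := ⟨j - 1, by omega⟩
      have hlen : (G.neighborSet v).toFinset.toList.length = d := by
        rw [Finset.length_toList]; exact hreg v
      rw [hlen]
      simp only [Nat.add_sub_cancel]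
      rw [Nat.mul_succ]
      have hc : j' * d = d * j' := Nat.mul_comm j' d
      rw [hc]
      generalize d * j' = A
      omega

lemma key_exp : ∀ x ∈ Set.Icc (0:ℝ) 1, (1 - x) * Real.exp (x + x ^ 2 / 2) ≤ 1 := by
  have hder : ∀ x : ℝ, HasDerivAt (fun x : ℝ => (1 - x) * Real.exp (x + x ^ 2 / 2))
      (-(x ^ 2) * Real.exp (x + x ^ 2 / 2)) x := by
    intro x
    have h1 : HasDerivAt (fun x : ℝ => 1 - x) (-1) x := by
      simpa using (hasDerivAt_id x).const_sub 1
    have h2 : HasDerivAt (fun x : ℝ => x + x ^ 2 / 2) (1 + x) x := by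
      have h2a := (hasDerivAt_pow 2 x).div_const 2
      have h3 := (hasDerivAt_id' x).add h2a
      refine h3.congr_deriv ?_
      norm_num
    have h5 := h1.mul h2.exp
    refine h5.congr_deriv ?_
    ring
  have hdiff : Differentiable ℝ (fun x : ℝ => (1 - x) * Real.exp (x + x ^ 2 / 2)) :=
    fun x => (hder x).differentiableAt
  have hanti : AntitoneOn (fun x : ℝ => (1 - x) * Real.exp (x + x ^ 2 / 2)) (Set.Icc 0 1) := by
    refine antitoneOn_of_deriv_nonpos (convex_Icc 0 1) hdiff.continuous.continuousOn
      (fun x _ => (hdiff x).differentiableWithinAt) ?_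
    intro x _
    rw [(hder x).deriv]
    have := Real.exp_pos (x + x ^ 2 / 2)
    nlinarith
  intro x hx
  have h := hanti (Set.left_mem_Icc.mpr (by norm_num)) hx hx.1
  simpa using h

lemma key_log {ε : ℝ} (hε0 : 0 ≤ ε) (hε1 : ε < 1) :
    Real.log (1 - ε) ≤ -ε - ε ^ 2 / 2 := by
  have h1ε : 0 < 1 - ε := by linarith
  have h := key_exp ε ⟨hε0, hε1.le⟩
  have hexp : 0 < Real.exp (ε + ε ^ 2 / 2) := Real.exp_pos _
  have h2 : 1 - ε ≤ Real.exp (-(ε + ε ^ 2 / 2)) := by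
    rw [Real.exp_neg]
    have h3 := mul_le_mul_of_nonneg_right h (inv_nonneg.mpr hexp.le)
    rwa [mul_assoc, mul_inv_cancel₀ hexp.ne', mul_one, one_mul] at h3
  calc Real.log (1 - ε) ≤ Real.log (Real.exp (-(ε + ε ^ 2 / 2))) :=
        Real.log_le_log h1ε h2
    _ = -(ε + ε ^ 2 / 2) := Real.log_exp _
    _ = -ε - ε ^ 2 / 2 := by ring

lemma tail_num {ε : ℝ} (hε0 : 0 < ε) (hε1 : ε < 1) {d : ℕ} (hd : 1 ≤ d) (M : ℕ) :
    binTail ((1 - ε) / d) (d * M) M ≤ Real.exp (-((M : ℝ) * ε ^ 2 / 2)) := by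
  have hd0 : (0:ℝ) < d := by exact_mod_cast Nat.lt_of_lt_of_le Nat.zero_lt_one hd
  have hd1 : (1:ℝ) ≤ d := by exact_mod_cast hd
  set p := (1 - ε) / (d:ℝ) with hp
  have hp0 : 0 ≤ p := div_nonneg (by linarith) hd0.le
  have hp1 : p ≤ 1 := by rw [hp, div_le_one hd0]; linarith
  have h1ε : 0 < 1 - ε := by linarith
  set t := -Real.log (1 - ε) with htdef
  have ht : 0 ≤ t := by
    have hl : Real.log (1 - ε) ≤ 0 := Real.log_nonpos (by linarith) (by linarith)
    rw [htdef]; linarith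
  have hexp_t : Real.exp t = (1 - ε)⁻¹ := by
    rw [htdef, Real.exp_neg, Real.exp_log h1ε]
  have hbase : 1 - p + p * Real.exp t = 1 + ε / d := by
    rw [hexp_t, hp]
    field_simp
    ring
  have h := binTail_le_chernoff hp0 hp1 ht (d * M) M
  rw [hbase] at h
  refine h.trans ?_
  have hpow : (1 + ε / d) ^ (d * M) ≤ Real.exp (ε * M) := by
    have h1 : (1 + ε / d) ≤ Real.exp (ε / d) := by
      have := Real.add_one_le_exp (ε / d)
      linarith
    calc (1 + ε / d) ^ (d * M) ≤ (Real.exp (ε / d)) ^ (d * M) :=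
          pow_le_pow_left₀ (by positivity) h1 _
      _ = Real.exp (((d * M : ℕ) : ℝ) * (ε / d)) := by rw [Real.exp_nat_mul]
      _ = Real.exp (ε * M) := by
          congr 1
          push_cast
          field_simp
  have hkey : ε - t ≤ -(ε ^ 2 / 2) := by
    have := key_log hε0.le hε1
    rw [htdef]
    linarith
  calc Real.exp (-(t * M)) * (1 + ε / d) ^ (d * M)
      ≤ Real.exp (-(t * M)) * Real.exp (ε * M) := by
        refine mul_le_mul_of_nonneg_left hpow (Real.exp_pos _).le
    _ = Real.exp ((M : ℝ) * (ε - t)) := by rw [← Real.exp_add]; ring_nf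
    _ ≤ Real.exp (-((M : ℝ) * ε ^ 2 / 2)) := by
        rw [Real.exp_le_exp]
        have hM : (0:ℝ) ≤ (M : ℝ) := Nat.cast_nonneg M
        nlinarith

end SCB

set_option maxHeartbeats 1000000
open SCB
theorem subcritical_component_bound :
    ∃ ε₀ : ℝ, 0 < ε₀ ∧ ∀ ε : ℝ, 0 < ε → ε < ε₀ → ∀ η : ℝ, 0 < η →
    ∃ C : ℝ, 0 < C ∧ ∀ n d : ℕ, 3 ≤ d → C ≤ (n : ℝ) / d →
    ∀ G : SimpleGraph (Fin n), (∀ v, Nat.card (G.neighborSet v) = d) →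
    1 - η ≤ percProb ((1 - ε) / d)
      {ω : Fin n → Bool | ∀ c : (percGraph G ω).ConnectedComponent,
        (Nat.card c.supp : ℝ) ≤ 4 / ε ^ 2 * Real.log ((n : ℝ) / d)} := by
  refine ⟨1/2, by norm_num, ?_⟩
  intro ε hε0 hε2 η hη
  refine ⟨3 + 2/η, by positivity, ?_⟩
  intro n d hd3 hC G hreg
  have hε1 : ε < 1 := by linarith
  have hεne : ε ≠ 0 := ne_of_gt hε0
  have hd0 : (0:ℝ) < d := by exact_mod_cast (by omega : 0 < d)
  have hd1 : (1:ℝ) ≤ d := by exact_mod_cast (by omega : 1 ≤ d)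
  set p := (1 - ε) / (d:ℝ) with hp
  have hp0 : 0 ≤ p := div_nonneg (by linarith) hd0.le
  have hp1 : p ≤ 1 := by rw [hp, div_le_one hd0]; linarith
  set r := (n:ℝ)/(d:ℝ) with hr
  have hr3 : (3:ℝ) ≤ r := by
    have h2η : 0 < 2/η := by positivity
    calc (3:ℝ) ≤ 3 + 2/η := by linarith
      _ ≤ r := hC
  have hr0 : (0:ℝ) < r := by linarith
  have hlog1 : 1 ≤ Real.log r := by
    rw [Real.le_log_iff_exp_le hr0]
    calc Real.exp 1 ≤ 2.7182818286 := Real.exp_one_lt_d9.le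
      _ ≤ 3 := by norm_num
      _ ≤ r := hr3
  set K := 4 / ε ^ 2 * Real.log r with hK
  have hK0 : 0 < K := by
    have h4ε : 0 < 4 / ε ^ 2 := by positivity
    nlinarith
  set k := ⌊K⌋₊ + 1 with hkdef
  have hregF : ∀ u, (G.neighborSet u).toFinset.card = d := by
    intro u
    have h := hreg u
    rwa [Nat.card_eq_fintype_card, ← Set.toFinset_card] at h
  set Bad := {ω : Fin n → Bool | ¬ ∀ c : (percGraph G ω).ConnectedComponent,
    (Nat.card c.supp : ℝ) ≤ K} with hBadDef
  have hGood : {ω : Fin n → Bool | ∀ c : (percGraph G ω).ConnectedComponent,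
      (Nat.card c.supp : ℝ) ≤ K} = {ω | ω ∉ Bad} := by
    ext ω; simp [hBadDef]
  rw [hGood, percProb_compl]
  have hBadBound : percProb p Bad ≤ η := by
    have hsub : Bad ⊆ {ω : Fin n → Bool | ∃ v : Fin n,
        ω v = true ∧ k ≤ Nat.card (reachSet G ω v)} := by
      intro ω hω
      rw [hBadDef, Set.mem_setOf_eq] at hω
      push_neg at hω
      obtain ⟨c, hc⟩ := hω
      obtain ⟨x, hx⟩ := c.exists_rep
      have hx' : (percGraph G ω).connectedComponentMk x = c := hx
      have hxv : ω (x : Fin n) = true := x.2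
      refine ⟨(x : Fin n), hxv, ?_⟩
      have hcard := card_supp (G := G) hxv
      have hxx : (⟨(x : Fin n), hxv⟩ : ↥(vertexSet ω)) = x := Subtype.ext rfl
      rw [hxx, hx'] at hcard
      have hfl : ⌊K⌋₊ < Nat.card c.supp := (Nat.floor_lt hK0.le).mpr hc
      rw [hcard] at hfl
      omega
    have h1 : percProb p Bad ≤ ∑ v : Fin n,
        percProb p {ω | ω v = true ∧ k ≤ Nat.card (reachSet G ω v)} :=
      (percProb_mono hp0 hp1 hsub).trans
        (percProb_exists_le hp0 hp1 (fun v ω => ω v = true ∧ k ≤ Nat.card (reachSet G ω v)))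
    have h2 : ∀ v : Fin n, percProb p {ω | ω v = true ∧ k ≤ Nat.card (reachSet G ω v)}
        ≤ p * binTail p (d * (k - 1)) (k - 1) :=
      fun v => per_vertex hp0 hp1 G d hregF v k (by omega)
    have hM : (k - 1 : ℕ) = ⌊K⌋₊ := by omega
    have h3 : binTail p (d * (k - 1)) (k - 1)
        ≤ Real.exp (-(((k - 1 : ℕ) : ℝ) * ε ^ 2 / 2)) := tail_num hε0 hε1 (by omega) _
    have hKfloor : K - 1 ≤ ((k - 1 : ℕ) : ℝ) := by
      rw [hM]
      have hKf := Nat.lt_floor_add_one K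
      push_cast
      linarith
    have hA : 2 * Real.log r - ε ^ 2 / 2 ≤ ((k - 1 : ℕ) : ℝ) * ε ^ 2 / 2 := by
      have h5 : (K - 1) * (ε ^ 2 / 2) ≤ ((k - 1 : ℕ) : ℝ) * (ε ^ 2 / 2) :=
        mul_le_mul_of_nonneg_right hKfloor (by positivity)
      have h6 : (K - 1) * (ε ^ 2 / 2) = 2 * Real.log r - ε ^ 2 / 2 := by
        rw [hK]; field_simp; ring
      linarith
    have hε14 : ε ^ 2 / 2 ≤ 1/8 := by nlinarith
    have h4 : Real.exp (-(((k - 1 : ℕ) : ℝ) * ε ^ 2 / 2))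
        ≤ Real.exp (1/8) * Real.exp (-(2 * Real.log r)) := by
      rw [← Real.exp_add, Real.exp_le_exp]
      linarith
    have hexplog : Real.exp (-(2 * Real.log r)) = 1 / r^2 := by
      rw [show (2:ℝ) * Real.log r = Real.log r + Real.log r by ring, neg_add,
        Real.exp_add, Real.exp_neg, Real.exp_log hr0]
      field_simp
    have hexp18 : Real.exp (1/8 : ℝ) ≤ 2 := by
      have h5 := Real.add_one_le_exp (-(1/8) : ℝ)
      have h6 : Real.exp (1/8 : ℝ) * Real.exp (-(1/8) : ℝ) = 1 := by
        rw [← Real.exp_add]; norm_num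
      have h7 := mul_le_mul_of_nonneg_left h5 (Real.exp_pos (1/8 : ℝ)).le
      rw [h6] at h7
      nlinarith [Real.exp_pos (1/8 : ℝ)]
    have hterm : ∀ v : Fin n, percProb p {ω | ω v = true ∧ k ≤ Nat.card (reachSet G ω v)}
        ≤ p * (2 * (1 / r^2)) := by
      intro v
      refine (h2 v).trans (mul_le_mul_of_nonneg_left ?_ hp0)
      calc binTail p (d * (k - 1)) (k - 1)
          ≤ Real.exp (-(((k - 1 : ℕ) : ℝ) * ε ^ 2 / 2)) := h3
        _ ≤ Real.exp (1/8) * Real.exp (-(2 * Real.log r)) := h4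
        _ ≤ 2 * (1 / r^2) := by
            rw [hexplog]
            exact mul_le_mul_of_nonneg_right hexp18 (by positivity)
    have hchain : percProb p Bad ≤ (n : ℝ) * (p * (2 * (1 / r^2))) := by
      refine h1.trans ?_
      calc ∑ v : Fin n, percProb p {ω | ω v = true ∧ k ≤ Nat.card (reachSet G ω v)}
          ≤ ∑ _v : Fin n, p * (2 * (1 / r^2)) := Finset.sum_le_sum fun v _ => hterm v
        _ = (n : ℝ) * (p * (2 * (1 / r^2))) := by
            rw [Finset.sum_const, Finset.card_univ, Fintype.card_fin, nsmul_eq_mul]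
    refine hchain.trans ?_
    have hnp : (n : ℝ) * p ≤ r := by
      rw [hp, hr]
      have he1 : (n : ℝ) * ((1 - ε) / d) = (n : ℝ) * (1 - ε) / d := by ring
      rw [he1]
      rw [div_le_div_iff₀ hd0 hd0]
      have hn0 : (0:ℝ) ≤ n := Nat.cast_nonneg n
      nlinarith [mul_nonneg (mul_nonneg hn0 hd0.le) hε0.le]
    have hrη : 2 / r ≤ η := by
      have hC2 : 2/η ≤ r := by
        have h2η : 0 ≤ 3 := by norm_num
        calc 2/η ≤ 3 + 2/η := by norm_num
          _ ≤ r := hC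
      rw [div_le_iff₀ hr0]
      rw [div_le_iff₀ hη] at hC2
      linarith
    calc (n : ℝ) * (p * (2 * (1 / r^2))) = ((n:ℝ) * p) * (2 / r^2) := by ring
      _ ≤ r * (2 / r^2) := mul_le_mul_of_nonneg_right hnp (by positivity)
      _ = 2 / r := by field_simp
      _ ≤ η := hrη
  linarith
end

section
/- For every sufficiently small constant ε > 0 and every η > 0 there exists C > 0 such that the following holds. Let d ≥ 3 and n be integers with n/d ≥ C, let p = (1−ε)/d, set k = (4/ε²)·ln(n/d), and let X₁, …, Xₙ be i.i.d. Bernoulli(p) random variables. Then with probability at least 1 − η there is no interval I of kd consecutive indices in {1,…,n} such that the first variable of I takes value 1 and at least k of the variables X_i with i ∈ I take value 1. -/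
open scoped Classical

section Aux
set_option linter.unusedSectionVars false
set_option maxHeartbeats 1000000
variable {V : Type*} [Fintype V] [DecidableEq V]

lemma sum_prod_bool (f : V → Bool → ℝ) :
    ∑ ω : V → Bool, ∏ v, f v (ω v) = ∏ v, (f v true + f v false) := by
  have h := Finset.prod_univ_sum (fun _ : V => (Finset.univ : Finset Bool))
    (fun v b => f v b)
  simp only [Fintype.piFinset_univ] at h
  rw [← h]
  exact Finset.prod_congr rfl fun v _ => Fintype.sum_bool (f v)

lemma weight_nonneg {p : ℝ} (hp0 : 0 ≤ p) (hp1 : p ≤ 1) (ω : V → Bool) :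
    0 ≤ ∏ v : V, if ω v = true then p else 1 - p :=
  Finset.prod_nonneg fun v _ => by split <;> linarith

lemma sum_weight (p : ℝ) :
    ∑ ω : V → Bool, (∏ v : V, if ω v = true then p else 1 - p) = 1 := by
  have h := sum_prod_bool (V := V) (fun _ b => if b = true then p else 1 - p)
  simpa using h

lemma percProb_compl (p : ℝ) (A : Set (V → Bool)) :
    percProb p Aᶜ = 1 - percProb p A := by
  have key : percProb p Aᶜ = ∑ ω : V → Bool,
      ((∏ v : V, if ω v = true then p else 1 - p)
        - if ω ∈ A then (∏ v : V, if ω v = true then p else 1 - p) else 0) := by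
    refine Finset.sum_congr rfl fun ω _ => ?_
    by_cases h : ω ∈ A <;> simp [h]
  rw [key, Finset.sum_sub_distrib, sum_weight]
  rfl

lemma percProb_union_le {ι : Type*} (p : ℝ) (hp0 : 0 ≤ p) (hp1 : p ≤ 1)
    (s : Finset ι) (P : ι → (V → Bool) → Prop) :
    percProb p {ω | ∃ a ∈ s, P a ω} ≤ ∑ a ∈ s, percProb p {ω | P a ω} := by
  simp only [percProb]
  rw [Finset.sum_comm]
  refine Finset.sum_le_sum fun ω _ => ?_
  split
  · next h =>
    obtain ⟨a, ha, hPa⟩ := h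
    refine le_trans ?_ (Finset.single_le_sum (f := fun a =>
      if ω ∈ {ω : V → Bool | P a ω} then (∏ v : V, if ω v = true then p else 1 - p) else 0)
      (fun i _ => by split; exacts [weight_nonneg hp0 hp1 ω, le_refl 0]) ha)
    simp only [Set.mem_setOf_eq, hPa, if_true]
    exact le_rfl
  · exact Finset.sum_nonneg fun a _ => by
      split
      · exact weight_nonneg hp0 hp1 ω
      · exact le_refl 0


end Aux

lemma card_coe {n : ℕ} (J : Finset ℕ) (hJ : ∀ i ∈ J, i < n) (P : ℕ → Prop)
    [DecidablePred P] [DecidablePred fun v : Fin n => (v : ℕ) ∈ J ∧ P (v : ℕ)] :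
    (J.filter P).card
      = (Finset.univ.filter (fun v : Fin n => (v : ℕ) ∈ J ∧ P (v : ℕ))).card := by
  refine Finset.card_bij (fun i hi => ⟨i, hJ i (Finset.mem_filter.mp hi).1⟩) ?_ ?_ ?_
  · intro i hi
    rcases Finset.mem_filter.mp hi with ⟨h1, h2⟩
    exact Finset.mem_filter.mpr ⟨Finset.mem_univ _, h1, h2⟩
  · intro i hi j hj h
    simpa using congrArg Fin.val h
  · intro v hv
    rcases Finset.mem_filter.mp hv with ⟨-, h1, h2⟩
    exact ⟨(v : ℕ), Finset.mem_filter.mpr ⟨h1, h2⟩, by simp⟩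

lemma single_interval_bound {n : ℕ} (p T kR : ℝ) (a K : ℕ)
    (ha : a + K ≤ n) (hK : 1 ≤ K)
    (hp0 : 0 ≤ p) (hp1 : p ≤ 1) (hT : 1 ≤ T) :
    percProb p {ω : Fin n → Bool |
      (if h : a < n then ω ⟨a, h⟩ else false) = true ∧
      kR ≤ (((Finset.Ico a (a + K)).filter
        (fun i => (if h : i < n then ω ⟨i, h⟩ else false) = true)).card : ℝ)}
    ≤ Real.exp (-(kR * Real.log T)) * ((p * T) * ((1 - p) + p * T) ^ (K - 1)) := by
  have hKpos : 0 < K := hK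
  have han : a < n := lt_of_lt_of_le (Nat.lt_add_of_pos_right hKpos) ha
  have hT0 : (0 : ℝ) < T := lt_of_lt_of_le one_pos hT
  set a' : Fin n := ⟨a, han⟩ with ha'
  set I : Finset ℕ := Finset.Ico a (a + K) with hIdef
  have haI : a ∈ I := Finset.mem_Ico.mpr ⟨le_rfl, Nat.lt_add_of_pos_right hKpos⟩
  have hIlt : ∀ i ∈ I, i < n := fun i hi =>
    lt_of_lt_of_le (Finset.mem_Ico.mp hi).2 ha
  set B : Set (Fin n → Bool) := {ω : Fin n → Bool |
      (if h : a < n then ω ⟨a, h⟩ else false) = true ∧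
      kR ≤ ((I.filter
        (fun i => (if h : i < n then ω ⟨i, h⟩ else false) = true)).card : ℝ)} with hB
  set g : Fin n → Bool → ℝ := fun v b =>
    if b = true then (if (v : ℕ) ∈ I then T else 1) else (if v = a' then 0 else 1) with hg
  have hg0 : ∀ v b, 0 ≤ g v b := by
    intro v b
    simp only [hg]
    split
    · split <;> linarith
    · split <;> norm_num
  -- pointwise bound
  have key : ∀ ω : Fin n → Bool,
      (@ite ℝ (ω ∈ B) (Classical.propDecidable _) (∏ v : Fin n, if ω v = true then p else 1 - p) 0)
          * Real.exp (kR * Real.log T)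
        ≤ ∏ v : Fin n, ((if ω v = true then p else 1 - p) * g v (ω v)) := by
    intro ω
    by_cases hω : ω ∈ B
    · rw [if_pos hω]
      obtain ⟨h1, h2⟩ := hω
      rw [dif_pos han] at h1
      have hωa : ω a' = true := h1
      set S : Finset (Fin n) := Finset.univ.filter
        (fun v : Fin n => (v : ℕ) ∈ I ∧ (if h : (v : ℕ) < n then ω ⟨(v : ℕ), h⟩ else false) = true) with hS
      have hcard : ((I.filter
          (fun i => (if h : i < n then ω ⟨i, h⟩ else false) = true)).card : ℝ) = (S.card : ℝ) := by
        norm_cast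
        exact card_coe I hIlt _
      rw [hcard] at h2
      have hSmem : ∀ v ∈ S, g v (ω v) = T := by
        intro v hv
        rcases Finset.mem_filter.mp hv with ⟨-, hvI, hvtrue⟩
        rw [dif_pos v.isLt] at hvtrue
        simp only [Fin.eta] at hvtrue
        simp only [hg, hvtrue, if_pos, hvI, if_true]
      have hprodS : ∏ v ∈ S, g v (ω v) = T ^ S.card := by
        rw [Finset.prod_congr rfl hSmem, Finset.prod_const]
      have h1le : (1:ℝ) ≤ ∏ v ∈ Sᶜ, g v (ω v) := by
        have hone : ∀ v ∈ Sᶜ, (1:ℝ) ≤ g v (ω v) := by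
          intro v _
          by_cases hb : ω v = true
          · simp only [hg, hb, if_true]
            split <;> linarith
          · have hva : v ≠ a' := fun h => hb (h ▸ hωa)
            simp only [hg, hb]
            norm_num [hva]
        have := Finset.prod_le_prod (s := Sᶜ) (f := fun _ => (1:ℝ))
          (g := fun v => g v (ω v)) (fun _ _ => zero_le_one) hone
        simpa using this
      have hge : T ^ S.card ≤ ∏ v : Fin n, g v (ω v) := by
        calc T ^ S.card = ∏ v ∈ S, g v (ω v) := hprodS.symm
          _ ≤ (∏ v ∈ S, g v (ω v)) * ∏ v ∈ Sᶜ, g v (ω v) :=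
              le_mul_of_one_le_right (Finset.prod_nonneg fun v _ => hg0 v (ω v)) h1le
          _ = ∏ v : Fin n, g v (ω v) := Finset.prod_mul_prod_compl S _
      have hexp : Real.exp (kR * Real.log T) ≤ T ^ S.card := by
        have h3 : kR * Real.log T ≤ (S.card : ℝ) * Real.log T :=
          mul_le_mul_of_nonneg_right h2 (Real.log_nonneg hT)
        calc Real.exp (kR * Real.log T) ≤ Real.exp ((S.card : ℝ) * Real.log T) :=
              Real.exp_le_exp.mpr h3
          _ = T ^ S.card := by rw [Real.exp_nat_mul, Real.exp_log hT0]
      rw [Finset.prod_mul_distrib]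
      refine mul_le_mul_of_nonneg_left ?_ (weight_nonneg hp0 hp1 ω)
      exact le_trans hexp hge
    · rw [if_neg hω, zero_mul]
      exact Finset.prod_nonneg fun v _ => mul_nonneg (by split <;> linarith) (hg0 v (ω v))
  -- sum the pointwise bound and evaluate the product
  have hsum : percProb p B * Real.exp (kR * Real.log T)
      ≤ (p * T) * ((1 - p) + p * T) ^ (K - 1) := by
    rw [percProb, Finset.sum_mul]
    refine le_trans (Finset.sum_le_sum fun ω _ => key ω) ?_
    rw [sum_prod_bool (fun v b => (if b = true then p else 1 - p) * g v b)]
    -- evaluate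
    have heval : ∏ v : Fin n, ((if true = true then p else 1 - p) * g v true
        + (if false = true then p else 1 - p) * g v false)
        = (p * T) * ((1 - p) + p * T) ^ (K - 1) := by
      have hF : ∀ v : Fin n, ((if true = true then p else 1 - p) * g v true
          + (if false = true then p else 1 - p) * g v false)
          = p * (if (v : ℕ) ∈ I then T else 1) + (1 - p) * (if v = a' then 0 else 1) := by
        intro v; simp [hg]
      rw [Finset.prod_congr rfl fun v _ => hF v]
      rw [← Finset.prod_filter_mul_prod_filter_not Finset.univ
        (fun v : Fin n => (v : ℕ) ∈ I)]
      have hout : ∏ v ∈ Finset.univ.filter (fun v : Fin n => ¬ (v : ℕ) ∈ I),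
          (p * (if (v : ℕ) ∈ I then T else 1) + (1 - p) * (if v = a' then 0 else 1)) = 1 := by
        refine Finset.prod_eq_one fun v hv => ?_
        rcases Finset.mem_filter.mp hv with ⟨-, hvI⟩
        have hva : v ≠ a' := by
          intro h; exact hvI (by rw [h]; exact haI)
        simp [hvI, hva]
      rw [hout, mul_one]
      set SI : Finset (Fin n) := Finset.univ.filter (fun v : Fin n => (v : ℕ) ∈ I) with hSI
      have ha'SI : a' ∈ SI := Finset.mem_filter.mpr ⟨Finset.mem_univ _, haI⟩
      have hSIcard : SI.card = K := by
        have hcc : SI.card = I.card := by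
          refine Finset.card_bij (fun v _ => (v : ℕ)) ?_ ?_ ?_
          · intro v hv; exact (Finset.mem_filter.mp hv).2
          · intro v hv w hw h; exact Fin.val_injective h
          · intro i hi
            exact ⟨⟨i, hIlt i hi⟩, Finset.mem_filter.mpr ⟨Finset.mem_univ _, hi⟩, rfl⟩
        rw [hcc, hIdef, Nat.card_Ico]
        omega
      rw [← Finset.mul_prod_erase SI _ ha'SI]
      have hFa' : p * (if ((a' : Fin n) : ℕ) ∈ I then T else 1)
          + (1 - p) * (if a' = a' then 0 else 1) = p * T := by
        simp [show ((a' : Fin n) : ℕ) ∈ I from haI]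
      rw [hFa']
      have herase : ∏ v ∈ SI.erase a',
          (p * (if (v : ℕ) ∈ I then T else 1) + (1 - p) * (if v = a' then 0 else 1))
          = ((1 - p) + p * T) ^ (K - 1) := by
        have hmem : ∀ v ∈ SI.erase a',
            (p * (if (v : ℕ) ∈ I then T else 1) + (1 - p) * (if v = a' then 0 else 1))
            = (1 - p) + p * T := by
          intro v hv
          rcases Finset.mem_erase.mp hv with ⟨hva, hvSI⟩
          rcases Finset.mem_filter.mp hvSI with ⟨-, hvI⟩
          simp [hvI, hva]
          ring
        rw [Finset.prod_congr rfl hmem, Finset.prod_const, Finset.card_erase_of_mem ha'SI,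
          hSIcard]
      rw [herase]
    exact le_of_eq heval
  -- conclude
  have hE : (0:ℝ) < Real.exp (kR * Real.log T) := Real.exp_pos _
  calc percProb p B
      = (percProb p B * Real.exp (kR * Real.log T)) * Real.exp (-(kR * Real.log T)) := by
        rw [mul_assoc, ← Real.exp_add]
        simp
    _ ≤ ((p * T) * ((1 - p) + p * T) ^ (K - 1)) * Real.exp (-(kR * Real.log T)) :=
        mul_le_mul_of_nonneg_right hsum (Real.exp_pos _).le
    _ = Real.exp (-(kR * Real.log T)) * ((p * T) * ((1 - p) + p * T) ^ (K - 1)) := by ring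


lemma log_one_sub_bound {ε : ℝ} (h0 : 0 < ε) (h1 : ε < 1/2) :
    ε + ε^2/4 + ε^3/8 ≤ -Real.log (1 - ε) := by
  have h2 : (0:ℝ) < 1 - ε := by linarith
  have h3 : (0:ℝ) < 1 - ε/2 := by linarith
  have l1 : Real.log (1 - ε/2) ≤ -(ε/2) := by
    have := Real.log_le_sub_one_of_pos h3; linarith
  have l2 : Real.log ((1-ε)/(1-ε/2)) ≤ (1-ε)/(1-ε/2) - 1 :=
    Real.log_le_sub_one_of_pos (by positivity)
  have l3 : Real.log ((1-ε)/(1-ε/2)) = Real.log (1-ε) - Real.log (1-ε/2) :=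
    Real.log_div (ne_of_gt h2) (ne_of_gt h3)
  have l4 : (1-ε)/(1-ε/2) - 1 ≤ -(ε/2) * (1 + ε/2 + ε^2/4) := by
    rw [div_sub_one (ne_of_gt h3), div_le_iff₀ h3]
    nlinarith
  nlinarith [l1, l2, l3, l4]

set_option maxHeartbeats 1000000 in
theorem no_dense_interval :
    ∃ ε₀ : ℝ, 0 < ε₀ ∧ ∀ ε : ℝ, 0 < ε → ε < ε₀ → ∀ η : ℝ, 0 < η →
    ∃ C : ℝ, 0 < C ∧ ∀ n d : ℕ, 3 ≤ d → C ≤ (n : ℝ) / d →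
    1 - η ≤ percProb ((1 - ε) / d)
      {ω : Fin n → Bool | ¬ ∃ a : ℕ,
        a + ⌈4 / ε ^ 2 * Real.log ((n : ℝ) / d) * d⌉₊ ≤ n ∧
        (if h : a < n then ω ⟨a, h⟩ else false) = true ∧
        4 / ε ^ 2 * Real.log ((n : ℝ) / d) ≤
          (((Finset.Ico a (a + ⌈4 / ε ^ 2 * Real.log ((n : ℝ) / d) * d⌉₊)).filter
            (fun i => (if h : i < n then ω ⟨i, h⟩ else false) = true)).card : ℝ)} := by
  refine ⟨1/2, by norm_num, ?_⟩
  intro ε hε hε2 η hη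
  refine ⟨Real.exp (1 + 2/ε * |Real.log η|), Real.exp_pos _, ?_⟩
  intro n d hd3 hC
  have hd3R : (3:ℝ) ≤ d := by exact_mod_cast hd3
  have hd0 : (0:ℝ) < d := by linarith
  have hεne : ε ≠ 0 := ne_of_gt hε
  have hnd0 : (0:ℝ) < (n:ℝ)/d := lt_of_lt_of_le (Real.exp_pos _) hC
  set L : ℝ := Real.log ((n:ℝ)/d) with hLdef
  have hLlb : 1 + 2/ε * |Real.log η| ≤ L := by
    rw [hLdef, ← Real.log_exp (1 + 2/ε * |Real.log η|)]
    exact Real.log_le_log (Real.exp_pos _) hC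
  have habs : 0 ≤ 2/ε * |Real.log η| := by positivity
  have hL1 : 1 ≤ L := by linarith
  have hL0 : 0 < L := lt_of_lt_of_le one_pos hL1
  set k : ℝ := 4/ε^2 * L with hkdef
  have hk0 : 0 < k := by
    rw [hkdef]
    exact mul_pos (by positivity) hL0
  set K : ℕ := ⌈k * ↑d⌉₊ with hKdef
  have hkd0 : 0 < k * d := mul_pos hk0 hd0
  have hK1 : 1 ≤ K := Nat.one_le_ceil_iff.mpr hkd0
  set p : ℝ := (1-ε)/d with hpdef
  have h1ε : (0:ℝ) < 1 - ε := by linarith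
  have hp0 : 0 ≤ p := le_of_lt (div_pos h1ε hd0)
  have hp1 : p ≤ 1 := by
    rw [hpdef, div_le_one hd0]; linarith
  set T : ℝ := (1-ε)⁻¹ with hTdef
  have hT1 : 1 ≤ T := (one_le_inv₀ h1ε).mpr (by linarith)
  have hpT : p * T = 1/d := by
    rw [hpdef, hTdef]; field_simp
  set s : Finset ℕ := (Finset.range n).filter (fun a => a + K ≤ n) with hsdef
  have hset : {ω : Fin n → Bool | ¬ ∃ a : ℕ,
        a + K ≤ n ∧
        (if h : a < n then ω ⟨a, h⟩ else false) = true ∧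
        k ≤ (((Finset.Ico a (a + K)).filter
            (fun i => (if h : i < n then ω ⟨i, h⟩ else false) = true)).card : ℝ)}
      = {ω : Fin n → Bool | ∃ a ∈ s,
        a + K ≤ n ∧
        (if h : a < n then ω ⟨a, h⟩ else false) = true ∧
        k ≤ (((Finset.Ico a (a + K)).filter
            (fun i => (if h : i < n then ω ⟨i, h⟩ else false) = true)).card : ℝ)}ᶜ := by
    ext ω
    simp only [Set.mem_setOf_eq, Set.mem_compl_iff, hsdef, Finset.mem_filter, Finset.mem_range]
    constructor
    · intro h h'
      obtain ⟨a, -, ha⟩ := h'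
      exact h ⟨a, ha⟩
    · intro h h'
      obtain ⟨a, ha⟩ := h'
      exact h ⟨a, ⟨by omega, ha.1⟩, ha⟩
  rw [hset, percProb_compl]
  have hbound : percProb p {ω : Fin n → Bool | ∃ a ∈ s,
        a + K ≤ n ∧
        (if h : a < n then ω ⟨a, h⟩ else false) = true ∧
        k ≤ (((Finset.Ico a (a + K)).filter
            (fun i => (if h : i < n then ω ⟨i, h⟩ else false) = true)).card : ℝ)} ≤ η := by
    set bound : ℝ := Real.exp (-(k * Real.log T)) * ((p * T) * ((1 - p) + p * T) ^ (K - 1))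
      with hbdef
    have hstep1 := percProb_union_le (V := Fin n) p hp0 hp1 s (fun a ω =>
        a + K ≤ n ∧
        (if h : a < n then ω ⟨a, h⟩ else false) = true ∧
        k ≤ (((Finset.Ico a (a + K)).filter
            (fun i => (if h : i < n then ω ⟨i, h⟩ else false) = true)).card : ℝ))
    have hstep2 : ∀ a ∈ s, percProb p {ω : Fin n → Bool |
        a + K ≤ n ∧
        (if h : a < n then ω ⟨a, h⟩ else false) = true ∧
        k ≤ (((Finset.Ico a (a + K)).filter
            (fun i => (if h : i < n then ω ⟨i, h⟩ else false) = true)).card : ℝ)} ≤ bound := by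
      intro a ha
      have haK : a + K ≤ n := (Finset.mem_filter.mp ha).2
      have hEq : {ω : Fin n → Bool |
          a + K ≤ n ∧
          (if h : a < n then ω ⟨a, h⟩ else false) = true ∧
          k ≤ (((Finset.Ico a (a + K)).filter
              (fun i => (if h : i < n then ω ⟨i, h⟩ else false) = true)).card : ℝ)}
          = {ω : Fin n → Bool |
          (if h : a < n then ω ⟨a, h⟩ else false) = true ∧
          k ≤ (((Finset.Ico a (a + K)).filter
              (fun i => (if h : i < n then ω ⟨i, h⟩ else false) = true)).card : ℝ)} := by
        ext ω
        simp [haK]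
      rw [hEq]
      exact single_interval_bound p T k a K haK hK1 hp0 hp1 hT1
    have hbound0 : 0 ≤ bound := by
      rw [hbdef]
      have hq0 : (0:ℝ) ≤ (1 - p) + p * T := by
        have : (0:ℝ) ≤ p * T := mul_nonneg hp0 (le_trans zero_le_one hT1)
        linarith
      exact mul_nonneg (Real.exp_pos _).le (mul_nonneg
        (mul_nonneg hp0 (le_trans zero_le_one hT1)) (pow_nonneg hq0 _))
    have hstep3 : ∑ _a ∈ s, bound ≤ n * bound := by
      rw [Finset.sum_const, nsmul_eq_mul]
      have hcard : (s.card : ℝ) ≤ n := by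
        have h1 := Finset.card_filter_le (Finset.range n) (fun a => a + K ≤ n)
        have h2 : s.card ≤ n := by
          rw [hsdef]
          simpa [Finset.card_range] using h1
        exact_mod_cast h2
      exact mul_le_mul_of_nonneg_right hcard hbound0
    -- arithmetic
    have hTlog : Real.log T = -Real.log (1-ε) := by rw [hTdef, Real.log_inv]
    have hlog : ε + ε^2/4 + ε^3/8 ≤ Real.log T := by
      rw [hTlog]; exact log_one_sub_bound hε hε2
    have hKle : ((K:ℝ) - 1) ≤ k * d := by
      have h3 := Nat.ceil_lt_add_one (le_of_lt hkd0)
      rw [hKdef]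
      push_cast
      linarith [h3]
    have hcast : ((K - 1 : ℕ) : ℝ) = (K:ℝ) - 1 := by
      have h4 : (1:ℕ) ≤ K := hK1
      push_cast [h4]
      ring
    have hc : ((1:ℝ) + ε/d) ^ (K-1) ≤ Real.exp (k * ε) := by
      calc ((1:ℝ)+ε/d)^(K-1)
          ≤ Real.exp (ε/d) ^ (K-1) := by
            apply pow_le_pow_left₀ (by positivity)
            have := Real.add_one_le_exp (ε/d)
            linarith
        _ = Real.exp (((K-1:ℕ):ℝ) * (ε/d)) := (Real.exp_nat_mul _ _).symm
        _ ≤ Real.exp (k * ε) := by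
            apply Real.exp_le_exp.mpr
            rw [hcast]
            calc ((K:ℝ)-1) * (ε/d)
                ≤ (k*d) * (ε/d) := mul_le_mul_of_nonneg_right hKle (by positivity)
              _ = k * ε := by field_simp
    have hpq : (1 - p) + p * T = 1 + ε/d := by
      rw [hpT, hpdef]
      field_simp
      ring
    have hexp : k * ε + (-(k * Real.log T)) ≤ -L + (-(ε/2 * L)) := by
      have h5 : ε - Real.log T ≤ -(ε^2/4 + ε^3/8) := by linarith
      have h6 : k * (ε - Real.log T) ≤ k * (-(ε^2/4 + ε^3/8)) :=
        mul_le_mul_of_nonneg_left h5 (le_of_lt hk0)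
      have h7 : k * (-(ε^2/4 + ε^3/8)) = -L + (-(ε/2 * L)) := by
        rw [hkdef]
        field_simp
        ring
      nlinarith [h6, h7]
    have hfinal : (n:ℝ) * bound ≤ η := by
      rw [hbdef, hpq, hpT]
      calc (n:ℝ) * (Real.exp (-(k*Real.log T)) * (1/(d:ℝ) * (1+ε/(d:ℝ))^(K-1)))
          ≤ (n:ℝ) * (Real.exp (-(k*Real.log T)) * (1/(d:ℝ) * Real.exp (k*ε))) := by
            apply mul_le_mul_of_nonneg_left _ (Nat.cast_nonneg n)
            apply mul_le_mul_of_nonneg_left _ (Real.exp_pos _).le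
            apply mul_le_mul_of_nonneg_left hc (by positivity)
        _ = (n:ℝ)/d * Real.exp (k*ε + (-(k * Real.log T))) := by
            rw [Real.exp_add]; ring
        _ ≤ (n:ℝ)/d * Real.exp (-L + (-(ε/2*L))) :=
            mul_le_mul_of_nonneg_left (Real.exp_le_exp.mpr hexp) (le_of_lt hnd0)
        _ = Real.exp (-(ε/2*L)) := by
            rw [Real.exp_add, Real.exp_neg (L), hLdef, Real.exp_log hnd0]
            have hn0 : (0:ℝ) < (n:ℝ) := by
              by_contra hcon
              push_neg at hcon
              have : (n:ℝ)/d ≤ 0 := div_nonpos_iff.mpr (Or.inr ⟨hcon, le_of_lt hd0⟩)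
              linarith
            field_simp
        _ ≤ η := by
            rw [← Real.exp_log hη]
            apply Real.exp_le_exp.mpr
            have h8 : 2/ε * |Real.log η| ≤ L := by linarith
            have h9 : |Real.log η| ≤ ε/2 * L := by
              have h10 := mul_le_mul_of_nonneg_left h8 (le_of_lt (half_pos hε))
              calc |Real.log η| = ε/2 * (2/ε * |Real.log η|) := by field_simp
                _ ≤ ε/2 * L := h10
            have h11 := neg_abs_le (Real.log η)
            linarith
    calc percProb p _ ≤ ∑ a ∈ s, percProb p _ := hstep1
      _ ≤ ∑ _a ∈ s, bound := Finset.sum_le_sum hstep2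
      _ ≤ n * bound := hstep3
      _ ≤ η := hfinal
  linarith
end

section
/- For every real ε with 0 < ε < 1/2, there exists a unique x ∈ (0,1) satisfying x = (1+ε)·(1 − exp(−x)); moreover this unique solution satisfies x > ln(1+ε). -/
open scoped Classical

lemma no_two_aux (a x y : ℝ) (ha : 1 < a) (hx0 : 0 < x) (hxy : x < y)
    (hx : x = a * (1 - Real.exp (-x))) (hy : y = a * (1 - Real.exp (-y))) : False := by
  have ha0 : (0:ℝ) < a := by linarith
  have hy0 : 0 < y := hx0.trans hxy
  have hl0 : 0 < x / y := div_pos hx0 hy0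
  have hl1 : x / y < 1 := (div_lt_one hy0).2 hxy
  have hne : (0:ℝ) ≠ -y := by linarith
  have hconv := strictConvexOn_exp.2 (Set.mem_univ (0:ℝ)) (Set.mem_univ (-y)) hne
    (by linarith : (0:ℝ) < 1 - x / y) hl0 (by ring)
  have harg : (1 - x / y) • (0:ℝ) + (x / y) • (-y) = -x := by
    rw [smul_eq_mul, smul_eq_mul, mul_zero, zero_add, mul_neg, div_mul_cancel₀ x (ne_of_gt hy0)]
  rw [harg] at hconv
  simp only [smul_eq_mul, Real.exp_zero, mul_one] at hconv
  have hxy' : x / y * y = x := div_mul_cancel₀ x (ne_of_gt hy0)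
  nlinarith [hconv, hx, hy, mul_pos hl0 ha0]

lemma sol_gt (ε x : ℝ) (hε : 0 < ε) (hx0 : 0 < x)
    (hx : x = (1 + ε) * (1 - Real.exp (-x))) : ε < x := by
  have hex : 0 < Real.exp x := Real.exp_pos x
  have h2 : (1 + x) * Real.exp (-x) < 1 := by
    rw [Real.exp_neg, mul_inv_lt_iff₀ hex]
    have := Real.add_one_lt_exp (ne_of_gt hx0)
    linarith
  nlinarith [h2, hx, Real.exp_pos (-x), sq_nonneg x]

theorem unique_solution_x :
    ∀ ε : ℝ, 0 < ε → ε < 1 / 2 →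
    (∃! x : ℝ, x ∈ Set.Ioo (0 : ℝ) 1 ∧ x = (1 + ε) * (1 - Real.exp (-x))) ∧
    (∀ x : ℝ, x ∈ Set.Ioo (0 : ℝ) 1 → x = (1 + ε) * (1 - Real.exp (-x)) →
      Real.log (1 + ε) < x) := by
  intro ε hε hε2
  set f : ℝ → ℝ := fun t => t - (1 + ε) * (1 - Real.exp (-t)) with hf
  have hcont : ContinuousOn f (Set.Icc (ε/2) 1) := by fun_prop
  have hfa : f (ε/2) ≤ 0 := by
    have hc0 : (0:ℝ) < ε/2 := by linarith
    have hex : 0 < Real.exp (ε/2) := Real.exp_pos _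
    have h2 : (1 + ε/2) * Real.exp (-(ε/2)) < 1 := by
      rw [Real.exp_neg, mul_inv_lt_iff₀ hex]
      have := Real.add_one_lt_exp (ne_of_gt hc0)
      linarith
    have hep : 0 < Real.exp (-(ε/2)) := Real.exp_pos _
    simp only [hf]
    nlinarith [h2, hep]
  have hfb : 0 < f 1 := by
    have he3 : Real.exp 1 < 3 := by
      have := Real.exp_one_lt_d9
      linarith
    have he0 : 0 < Real.exp 1 := Real.exp_pos 1
    have hmul : Real.exp (-1) * Real.exp 1 = 1 := by
      rw [← Real.exp_add]; norm_num
    simp only [hf]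
    nlinarith [hmul, he3, Real.exp_pos (-1), hε, hε2]
  have hiv := intermediate_value_Ico (by linarith : ε/2 ≤ (1:ℝ)) hcont
  have h0mem : (0:ℝ) ∈ Set.Ico (f (ε/2)) (f 1) := ⟨hfa, hfb⟩
  obtain ⟨x, hxI, hfx⟩ := hiv h0mem
  have hxeq : x = (1 + ε) * (1 - Real.exp (-x)) := by
    have : x - (1 + ε) * (1 - Real.exp (-x)) = 0 := hfx
    linarith
  have hxmem : x ∈ Set.Ioo (0:ℝ) 1 := ⟨by linarith [hxI.1], hxI.2⟩
  have ha1 : (1:ℝ) < 1 + ε := by linarith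
  have logpart : ∀ z : ℝ, z ∈ Set.Ioo (0 : ℝ) 1 → z = (1 + ε) * (1 - Real.exp (-z)) →
      Real.log (1 + ε) < z := by
    intro z hz hzeq
    have hzε := sol_gt ε z hε hz.1 hzeq
    have : (1 + ε) < Real.exp z := by
      have hep : 0 < Real.exp (-z) := Real.exp_pos _
      have h3 : (1 + ε) * Real.exp (-z) < 1 := by nlinarith [hzeq]
      have hmul : Real.exp (-z) * Real.exp z = 1 := by
        rw [← Real.exp_add]; norm_num
      nlinarith [hmul, h3, hep, Real.exp_pos z]
    exact (Real.log_lt_iff_lt_exp (by linarith)).2 this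
  refine ⟨⟨x, ⟨hxmem, hxeq⟩, ?_⟩, logpart⟩
  rintro z ⟨hzmem, hzeq⟩
  rcases lt_trichotomy z x with h | h | h
  · exact absurd (no_two_aux (1+ε) z x ha1 hzmem.1 h hzeq hxeq) (by simp)
  · exact h
  · exact absurd (no_two_aux (1+ε) x z ha1 hxmem.1 h hxeq hzeq) (by simp)
end

section
/- For every real ε with 0 < ε < 1/2, there exists a unique y ∈ (0,1) satisfying y·exp(−y) = (1+ε)·exp(−(1+ε)); moreover, writing x for the unique solution in (0,1) of x = (1+ε)·(1 − exp(−x)), one has x + y = 1 + ε. -/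
open scoped Classical

lemma f_hasDeriv (t : ℝ) :
    HasDerivAt (fun s : ℝ => s * Real.exp (-s)) ((1 - t) * Real.exp (-t)) t := by
  have h1 : HasDerivAt (fun s : ℝ => Real.exp (-s)) (-Real.exp (-t)) t := by
    exact ((Real.hasDerivAt_exp (-t)).comp t (hasDerivAt_neg t)).congr_deriv (by ring)
  have := (hasDerivAt_id t).mul h1
  exact this.congr_deriv (by simp only [id_eq]; ring)

lemma fmono : StrictMonoOn (fun t : ℝ => t * Real.exp (-t)) (Set.Icc 0 1) := by
  apply strictMonoOn_of_deriv_pos (convex_Icc 0 1)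
  · exact Continuous.continuousOn (by continuity)
  · intro t ht
    rw [interior_Icc] at ht
    rw [(f_hasDeriv t).deriv]
    exact mul_pos (by linarith [ht.2]) (Real.exp_pos _)

lemma h_hasDeriv (ε t : ℝ) :
    HasDerivAt (fun s : ℝ => (1 + ε) * (1 - Real.exp (-s)) - s)
      ((1 + ε) * Real.exp (-t) - 1) t := by
  have h1 : HasDerivAt (fun s : ℝ => Real.exp (-s)) (-Real.exp (-t)) t := by
    exact ((Real.hasDerivAt_exp (-t)).comp t (hasDerivAt_neg t)).congr_deriv (by ring)
  have h2 : HasDerivAt (fun s : ℝ => (1 + ε) * (1 - Real.exp (-s)))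
      ((1 + ε) * Real.exp (-t)) t := by
    have := ((hasDerivAt_const t (1:ℝ)).sub h1).const_mul (1 + ε)
    exact this.congr_deriv (by ring)
  exact h2.sub (hasDerivAt_id t)

lemma hmono (ε : ℝ) (hε : 0 < ε) :
    StrictMonoOn (fun t : ℝ => (1 + ε) * (1 - Real.exp (-t)) - t)
      (Set.Icc 0 (Real.log (1 + ε))) := by
  apply strictMonoOn_of_deriv_pos (convex_Icc _ _)
  · exact Continuous.continuousOn (by continuity)
  · intro t ht
    rw [interior_Icc] at ht
    rw [(h_hasDeriv ε t).deriv]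
    have hpos : (0:ℝ) < 1 + ε := by linarith
    have : Real.exp (-Real.log (1 + ε)) < Real.exp (-t) :=
      Real.exp_lt_exp.mpr (by linarith [ht.2])
    rw [Real.exp_neg, Real.exp_log hpos] at this
    have h2 := mul_lt_mul_of_pos_left this hpos
    rw [mul_inv_cancel₀ (ne_of_gt hpos)] at h2
    linarith

theorem unique_solution_y :
    ∀ ε : ℝ, 0 < ε → ε < 1 / 2 →
    (∃! y : ℝ, y ∈ Set.Ioo (0 : ℝ) 1 ∧
      y * Real.exp (-y) = (1 + ε) * Real.exp (-(1 + ε))) ∧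
    (∀ x : ℝ, x ∈ Set.Ioo (0 : ℝ) 1 → x = (1 + ε) * (1 - Real.exp (-x)) →
      ∀ y : ℝ, y ∈ Set.Ioo (0 : ℝ) 1 →
        y * Real.exp (-y) = (1 + ε) * Real.exp (-(1 + ε)) →
        x + y = 1 + ε) := by
  intro ε hε hε2
  have hpos : (0:ℝ) < 1 + ε := by linarith
  set c : ℝ := (1 + ε) * Real.exp (-(1 + ε)) with hc
  have hc0 : 0 < c := mul_pos hpos (Real.exp_pos _)
  have hc1 : c < Real.exp (-1) := by
    have h1 : 1 + ε < Real.exp ε := by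
      have := Real.add_one_lt_exp (x := ε) (by linarith)
      linarith
    have : c < Real.exp ε * Real.exp (-(1 + ε)) :=
      mul_lt_mul_of_pos_right h1 (Real.exp_pos _)
    calc c < Real.exp ε * Real.exp (-(1 + ε)) := this
      _ = Real.exp (-1) := by rw [← Real.exp_add]; ring_nf
  -- existence of y
  have hex : ∃ y ∈ Set.Ioo (0:ℝ) 1, y * Real.exp (-y) = c := by
    have hsub := intermediate_value_Ioo (le_of_lt one_pos)
      (Continuous.continuousOn (f := fun t : ℝ => t * Real.exp (-t)) (by continuity))
    have : c ∈ Set.Ioo ((0:ℝ) * Real.exp (-0)) (1 * Real.exp (-1)) := by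
      simpa using ⟨hc0, hc1⟩
    obtain ⟨y, hy, hfy⟩ := hsub this
    exact ⟨y, hy, hfy⟩
  obtain ⟨y₀, hy₀, hfy₀⟩ := hex
  have hsub : Set.Ioo (0:ℝ) 1 ⊆ Set.Icc 0 1 := Set.Ioo_subset_Icc_self
  have huniq : ∀ y₁ y₂ : ℝ, y₁ ∈ Set.Ioo (0:ℝ) 1 → y₂ ∈ Set.Ioo (0:ℝ) 1 →
      y₁ * Real.exp (-y₁) = y₂ * Real.exp (-y₂) → y₁ = y₂ := by
    intro y₁ y₂ h1 h2 heq
    exact fmono.injOn (hsub h1) (hsub h2) heq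
  constructor
  · exact ⟨y₀, ⟨hy₀, hfy₀⟩, fun z hz => huniq z y₀ hz.1 hy₀ (hz.2.trans hfy₀.symm)⟩
  · intro x hx hxeq y hy hyeq
    -- key identity: (1+ε) * exp(-x) = 1 + ε - x
    have hkey : (1 + ε) * Real.exp (-x) = 1 + ε - x := by linarith [hxeq]
    -- show log (1+ε) < x
    have hlog : Real.log (1 + ε) < x := by
      by_contra hcon
      push_neg at hcon
      have h0m : (0:ℝ) ∈ Set.Icc 0 (Real.log (1 + ε)) :=
        ⟨le_refl _, Real.log_nonneg (by linarith)⟩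
      have hxm : x ∈ Set.Icc 0 (Real.log (1 + ε)) := ⟨le_of_lt hx.1, hcon⟩
      have := hmono ε hε h0m hxm hx.1
      simp only [neg_zero, Real.exp_zero] at this
      have hx0 : (1 + ε) * (1 - Real.exp (-x)) - x = 0 := by linarith [hxeq]
      rw [hx0] at this
      simp at this
  -- y' := 1 + ε - x
    have hy'pos : 0 < 1 + ε - x := by
      rw [← hkey]; positivity
    have hy'lt : 1 + ε - x < 1 := by
      rw [← hkey]
      have : Real.exp (-x) < Real.exp (-Real.log (1 + ε)) :=
        Real.exp_lt_exp.mpr (by linarith)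
      rw [Real.exp_neg (Real.log (1 + ε)), Real.exp_log hpos] at this
      calc (1 + ε) * Real.exp (-x) < (1 + ε) * (1 + ε)⁻¹ :=
            mul_lt_mul_of_pos_left this hpos
        _ = 1 := mul_inv_cancel₀ (ne_of_gt hpos)
    have hinv : Real.exp (-x) * Real.exp x = 1 := by
      rw [← Real.exp_add]; simp
    have h3 : (1 + ε - x) * Real.exp x = 1 + ε := by
      rw [← hkey, mul_assoc, hinv, mul_one]
    have hy'eq : (1 + ε - x) * Real.exp (-(1 + ε - x)) = c := by
      have hsplit : Real.exp (-(1 + ε - x)) = Real.exp (-(1 + ε)) * Real.exp x := by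
        rw [← Real.exp_add]; ring_nf
      rw [hsplit, hc]
      calc (1 + ε - x) * (Real.exp (-(1 + ε)) * Real.exp x)
          = ((1 + ε - x) * Real.exp x) * Real.exp (-(1 + ε)) := by ring
        _ = (1 + ε) * Real.exp (-(1 + ε)) := by rw [h3]
    have : y = 1 + ε - x := huniq y (1 + ε - x) hy ⟨hy'pos, hy'lt⟩ (hyeq.trans hy'eq.symm)
    linarith
end
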